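/- Let V be an isometry on a Hilbert space K, A a positive bounded operator on K, and λ ∈ ℂ with |λ| < 1 such that A - b_λ(V)* A b_λ(V) is a positive operator, where b_λ(V) = (V-λ)(I-conj(λ)V)⁻¹. If {x_n} is an orthonormal basis of K consisting of vectors on which b_λ(V) acts as a shift (b_λ(V) x_n = x_{n+1} along each orbit indexed over ℕ or ℤ, with k orbits indexed by ℕ and ℓ orbits indexed by ℤ), then A - b_λ(V)* A b_λ(V) is of trace class with trace-norm at most (k + ℓ)·‖A‖. -/

import Mathlib

open scoped InnerProductSpace ComplexConjugate
open ContinuousLinearMap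

/-- The Möbius transform `b_λ(V) = (V - λI)(I - conj(λ)V)⁻¹`. -/
noncomputable def blam {K : Type*} [NormedAddCommGroup K] [InnerProductSpace ℂ K]
    [CompleteSpace K] (V : K →L[ℂ] K) (l : ℂ) : K →L[ℂ] K :=
  (V - l • (1 : K →L[ℂ] K)) * Ring.inverse ((1 : K →L[ℂ] K) - conj l • V)

/-- Telescoping sum over an integer interval. -/
lemma telescope_Icc_int_aux (g : ℤ → ℝ) (m : ℤ) (N : ℕ) :
    ∑ n ∈ Finset.Icc m (m + N), (g n - g (n + 1)) = g m - g (m + N + 1) := by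
  induction N with
  | zero => simp
  | succ N ih =>
      have hins : Finset.Icc m (m + (N + 1 : ℕ)) =
          insert (m + N + 1) (Finset.Icc m (m + N)) := by
        ext x
        simp only [Finset.mem_Icc, Finset.mem_insert]
        omega
      rw [hins, Finset.sum_insert (by simp), ih]
      push_cast
      ring_nf

/-- Telescoping sum over an integer interval. -/
lemma telescope_Icc_int (g : ℤ → ℝ) (m M : ℤ) (h : m ≤ M) :
    ∑ n ∈ Finset.Icc m M, (g n - g (n + 1)) = g m - g (M + 1) := by
  have hM : M = m + ((M - m).toNat : ℤ) := by omega
  rw [hM]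
  exact telescope_Icc_int_aux g m _

/-- Let `V` be an isometry on `K`, `A ≥ 0` bounded, `|λ| < 1`, and suppose
`D = A - b_λ(V)* A b_λ(V) ≥ 0`. If `K` has an orthonormal basis consisting of `k`
orbits indexed by `ℕ` and `ℓ` orbits indexed by `ℤ`, on each of which `b_λ(V)` acts as
the shift `xₙ ↦ xₙ₊₁`, then `D` is of trace class with trace norm (the diagonal sum of
the positive operator `D` over this basis) at most `(k + ℓ)‖A‖`. -/
theorem traceNorm_bound_along_shift_basis {K : Type*} [NormedAddCommGroup K]
    [InnerProductSpace ℂ K] [CompleteSpace K] (V : K →L[ℂ] K)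
    (hV : ∀ x : K, ‖V x‖ = ‖x‖) (A : K →L[ℂ] K) (hA : A.IsPositive)
    (l : ℂ) (hl : ‖l‖ < 1) (k L : ℕ)
    (hD : (A - ((adjoint (blam V l)).comp (A.comp (blam V l)))).IsPositive)
    (e : HilbertBasis ((Fin k × ℕ) ⊕ (Fin L × ℤ)) ℂ K)
    (he₁ : ∀ (i : Fin k) (n : ℕ),
      blam V l (e (Sum.inl (i, n))) = e (Sum.inl (i, n + 1)))
    (he₂ : ∀ (j : Fin L) (n : ℤ),
      blam V l (e (Sum.inr (j, n))) = e (Sum.inr (j, n + 1))) :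
    Summable (fun x => (⟪(A - ((adjoint (blam V l)).comp (A.comp (blam V l))))
        (e x), e x⟫_ℂ).re) ∧
      ∑' x, (⟪(A - ((adjoint (blam V l)).comp (A.comp (blam V l))))
        (e x), e x⟫_ℂ).re ≤ (k + L) * ‖A‖ := by
  classical
  set B := blam V l with hB
  set D := A - ((adjoint B).comp (A.comp B)) with hDdef
  set a : (Fin k × ℕ) ⊕ (Fin L × ℤ) → ℝ := fun x => (⟪A (e x), e x⟫_ℂ).re with ha
  set f : (Fin k × ℕ) ⊕ (Fin L × ℤ) → ℝ := fun x => (⟪D (e x), e x⟫_ℂ).re with hfdef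
  have hnorm : ∀ x, ‖e x‖ = 1 := fun x => e.orthonormal.1 x
  have ha_nonneg : ∀ x, 0 ≤ a x := fun x => hA.re_inner_nonneg_left (e x)
  have ha_le : ∀ x, a x ≤ ‖A‖ := by
    intro x
    have h1 : (⟪A (e x), e x⟫_ℂ).re ≤ ‖⟪A (e x), e x⟫_ℂ‖ := Complex.re_le_norm _
    have h2 : ‖⟪A (e x), e x⟫_ℂ‖ ≤ ‖A (e x)‖ * ‖e x‖ := norm_inner_le_norm _ _
    have h3 : ‖A (e x)‖ ≤ ‖A‖ * ‖e x‖ := A.le_opNorm _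
    calc a x ≤ ‖A (e x)‖ * ‖e x‖ := h1.trans h2
      _ ≤ (‖A‖ * ‖e x‖) * ‖e x‖ := by
          exact mul_le_mul_of_nonneg_right h3 (norm_nonneg _)
      _ = ‖A‖ := by rw [hnorm x]; ring
  have hf_nonneg : ∀ x, 0 ≤ f x := fun x => hD.re_inner_nonneg_left (e x)
  have hf_eq : ∀ x, f x = a x - (⟪A (B (e x)), B (e x)⟫_ℂ).re := by
    intro x
    simp only [hfdef, hDdef, sub_apply, comp_apply, inner_sub_left, Complex.sub_re, ha]
    congr 1
    rw [adjoint_inner_left]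
  have hf_eq₁ : ∀ (i : Fin k) (n : ℕ),
      f (Sum.inl (i, n)) = a (Sum.inl (i, n)) - a (Sum.inl (i, n + 1)) := by
    intro i n
    rw [hf_eq, he₁]
  have hf_eq₂ : ∀ (j : Fin L) (n : ℤ),
      f (Sum.inr (j, n)) = a (Sum.inr (j, n)) - a (Sum.inr (j, n + 1)) := by
    intro j n
    rw [hf_eq, he₂]
  -- key finite-sum bound
  have hsum : ∀ u : Finset ((Fin k × ℕ) ⊕ (Fin L × ℤ)),
      ∑ x ∈ u, f x ≤ (k + L) * ‖A‖ := by
    intro u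
    obtain ⟨N, hN⟩ : ∃ N : ℕ, (∀ p ∈ u.toLeft, p.2 < N) ∧
        (∀ q ∈ u.toRight, -(N : ℤ) ≤ q.2 ∧ q.2 ≤ N) := by
      refine ⟨(u.toLeft.sup (fun p => p.2)) + 1 +
        (u.toRight.sup (fun q => q.2.natAbs)), ?_, ?_⟩
      · intro p hp
        have h' : p.2 ≤ u.toLeft.sup (fun p => p.2) := Finset.le_sup (f := fun p : Fin k × ℕ => p.2) hp
        omega
      · intro q hq
        have h' : q.2.natAbs ≤ u.toRight.sup (fun q => q.2.natAbs) :=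
          Finset.le_sup (f := fun q : Fin L × ℤ => q.2.natAbs) hq
        omega
    set S : Finset ((Fin k × ℕ) ⊕ (Fin L × ℤ)) :=
      (Finset.univ ×ˢ Finset.range N).disjSum
        (Finset.univ ×ˢ Finset.Icc (-(N : ℤ)) (N : ℤ)) with hS
    have huS : u ⊆ S := by
      intro x hx
      rcases x with p | q
      · have hp : p ∈ u.toLeft := by simpa using hx
        have := (hN.1 p hp)
        simp only [hS, Finset.inl_mem_disjSum, Finset.mem_product, Finset.mem_univ,
          Finset.mem_range, true_and]
        exact this
      · have hq : q ∈ u.toRight := by simpa using hx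
        have := hN.2 q hq
        simp only [hS, Finset.inr_mem_disjSum, Finset.mem_product, Finset.mem_univ,
          Finset.mem_Icc, true_and]
        exact this
    have h1 : ∑ x ∈ u, f x ≤ ∑ x ∈ S, f x :=
      Finset.sum_le_sum_of_subset_of_nonneg huS (fun x _ _ => hf_nonneg x)
    have hleft : ∑ p ∈ Finset.univ ×ˢ Finset.range N, f (Sum.inl p) ≤ k * ‖A‖ := by
      rw [Finset.sum_product]
      have : ∀ i : Fin k, ∑ n ∈ Finset.range N, f (Sum.inl (i, n)) ≤ ‖A‖ := by
        intro i
        have ht : ∑ n ∈ Finset.range N, f (Sum.inl (i, n)) =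
            a (Sum.inl (i, 0)) - a (Sum.inl (i, N)) := by
          rw [Finset.sum_congr rfl (fun n _ => hf_eq₁ i n)]
          exact Finset.sum_range_sub' (fun n => a (Sum.inl (i, n))) N
        rw [ht]
        have := ha_le (Sum.inl (i, 0))
        have := ha_nonneg (Sum.inl (i, N))
        linarith
      calc ∑ i : Fin k, ∑ n ∈ Finset.range N, f (Sum.inl (i, n))
          ≤ ∑ _i : Fin k, ‖A‖ := Finset.sum_le_sum (fun i _ => this i)
        _ = k * ‖A‖ := by simp [mul_comm]
    have hright : ∑ q ∈ Finset.univ ×ˢ Finset.Icc (-(N : ℤ)) (N : ℤ),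
        f (Sum.inr q) ≤ L * ‖A‖ := by
      rw [Finset.sum_product]
      have hNN : -(N : ℤ) ≤ (N : ℤ) := by omega
      have : ∀ j : Fin L, ∑ n ∈ Finset.Icc (-(N : ℤ)) (N : ℤ),
          f (Sum.inr (j, n)) ≤ ‖A‖ := by
        intro j
        have ht : ∑ n ∈ Finset.Icc (-(N : ℤ)) (N : ℤ), f (Sum.inr (j, n)) =
            a (Sum.inr (j, -(N : ℤ))) - a (Sum.inr (j, (N : ℤ) + 1)) := by
          rw [Finset.sum_congr rfl (fun n _ => hf_eq₂ j n)]
          exact telescope_Icc_int (fun n => a (Sum.inr (j, n))) _ _ hNN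
        rw [ht]
        have := ha_le (Sum.inr (j, -(N : ℤ)))
        have := ha_nonneg (Sum.inr (j, (N : ℤ) + 1))
        linarith
      calc ∑ j : Fin L, ∑ n ∈ Finset.Icc (-(N : ℤ)) (N : ℤ), f (Sum.inr (j, n))
          ≤ ∑ _j : Fin L, ‖A‖ := Finset.sum_le_sum (fun j _ => this j)
        _ = L * ‖A‖ := by simp [mul_comm]
    have h2 : ∑ x ∈ S, f x ≤ k * ‖A‖ + L * ‖A‖ := by
      rw [hS, Finset.sum_disjSum]
      exact add_le_add hleft hright
    calc ∑ x ∈ u, f x ≤ k * ‖A‖ + L * ‖A‖ := h1.trans h2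
      _ = (k + L) * ‖A‖ := by ring
  have hsummable : Summable f := summable_of_sum_le hf_nonneg hsum
  exact ⟨hsummable, Summable.tsum_le_of_sum_le hsummable hsum⟩
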